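/- Given a function f : Σ₁* → Σ₂* in FL and a depth-susceptible k-sda M over Σ₂ running in polynomial time, the language L = { x ∈ Σ₁* : f(x) ∈ L(M) } is recognized by some logarithmic-space auxiliary depth-k storage automaton in polynomial time. -/

import Mathlib

/-!
Formalization infrastructure for depth-`k` storage automata (k-sda's),
following T. Yamakami, "Between SC and LOGDCFL: Families of Languages
Accepted by Logarithmic-Space Deterministic Auxiliary Depth-k Storage
Automata".
-/

namespace SDAP

/-- Head directions. -/
inductive Dir | left | stay | right
deriving DecidableEq

/-- Input-tape symbols: the two endmarkers `▷`, `◁` or a genuine symbol. -/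
inductive InSym (α : Type) | lend | rend | sym (a : α)

/-- Move a head position on a semi-infinite tape (clamped at `0`). -/
def moveNat (p : ℕ) : Dir → ℕ
  | Dir.left => p - 1
  | Dir.stay => p
  | Dir.right => p + 1

/-- Move the input head, clamped to the segment `[0, n+1]` holding `▷ x ◁`. -/
def moveIn (n p : ℕ) (d : Dir) : ℕ := min (moveNat p d) (n + 1)

/-- Symbol at position `i` of the input tape holding `▷ x ◁`. -/
def inAt {α : Type} (x : List α) (i : ℕ) : InSym α :=
  if i = 0 then InSym.lend
  else if h : i - 1 < x.length then InSym.sym (x.get ⟨i - 1, h⟩)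
  else InSym.rend

/-! ### One-way deterministic depth-`k` storage automata (k-sda's) -/

/-- Output of one transition of a k-sda. -/
structure SDAOut (Q G : ℕ) where
  st : Fin Q
  wr : Fin G
  dIn : Dir
  dSt : Dir

/-- A one-way deterministic depth-`k` storage automaton: a read-once input
tape and a depth-`k` storage tape with storage alphabet `Fin G` graded by
the depth function `dv`. -/
structure SDA (k : ℕ) (α : Type) where
  Q : ℕ
  G : ℕ
  dv : Fin G → ℕ
  box : Fin G      -- the initial blank `□`, depth 0
  blank : Fin G    -- the frozen blank `B`, depth k
  lend : Fin G     -- the left endmarker `▷` of the storage tape, depth k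
  q0 : Fin Q
  qacc : Finset (Fin Q)
  qrej : Finset (Fin Q)
  δ : Fin Q → InSym α → Fin G → SDAOut Q G

namespace SDA

variable {k : ℕ} {α : Type}

structure Cfg (M : SDA k α) where
  st : Fin M.Q
  ip : ℕ
  sp : ℕ
  tape : ℕ → Fin M.G

def init (M : SDA k α) : M.Cfg :=
  ⟨M.q0, 0, 0, fun i => if i = 0 then M.lend else M.box⟩

def Halted (M : SDA k α) (c : M.Cfg) : Prop := c.st ∈ M.qacc ∨ c.st ∈ M.qrej

def step (M : SDA k α) (x : List α) (c : M.Cfg) : M.Cfg :=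
  if c.st ∈ M.qacc ∨ c.st ∈ M.qrej then c
  else
    let t := M.δ c.st (inAt x c.ip) (c.tape c.sp)
    ⟨t.st, moveIn x.length c.ip t.dIn, moveNat c.sp t.dSt,
      Function.update c.tape c.sp t.wr⟩

def run (M : SDA k α) (x : List α) (t : ℕ) : M.Cfg := (M.step x)^[t] M.init

def Accepts (M : SDA k α) (x : List α) : Prop := ∃ t, (M.run x t).st ∈ M.qacc

def Rejects (M : SDA k α) (x : List α) : Prop := ∃ t, (M.run x t).st ∈ M.qrej

def Halts (M : SDA k α) (x : List α) : Prop := ∃ t, M.Halted (M.run x t)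

def Recognizes (M : SDA k α) (L : Language α) : Prop :=
  ∀ x, (x ∈ L ↔ M.Accepts x) ∧ (x ∉ L ↔ M.Rejects x)

def lang (M : SDA k α) : Language α := {x | M.Accepts x}

/-- `M` halts within polynomial time on every input. -/
def PolyTime (M : SDA k α) : Prop :=
  ∃ c : ℕ, ∀ x : List α, ∃ t ≤ c * x.length ^ c + c, M.Halted (M.run x t)

/-- Structural well-formedness: graded storage alphabet, read-once
(one-way) input head, and the depth-`k` requirement on the storage tape
(passing through a symbol of depth `e < k` raises its depth by `1`, and
by `2` at a turn, capped at `k`; depth-`k` symbols are frozen). Because the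
depth alphabets are mutually disjoint, the direction from which the head
arrived is encoded in the parity of the depth. -/
def WellFormed (M : SDA k α) : Prop :=
  (∀ s, M.dv s ≤ k) ∧ M.dv M.box = 0 ∧ M.dv M.blank = k ∧ M.dv M.lend = k ∧
  M.blank ≠ M.lend ∧
  ∀ q σ γ,
    ((M.δ q σ γ).dIn ≠ Dir.left) ∧
    ((M.δ q σ γ).wr = M.lend ↔ γ = M.lend) ∧
    (γ = M.lend → (M.δ q σ γ).dSt ≠ Dir.left) ∧
    (M.dv γ = k → (M.δ q σ γ).wr = γ) ∧
    ((M.δ q σ γ).dSt = Dir.stay → (M.δ q σ γ).wr = γ) ∧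
    (M.dv γ < k → (M.δ q σ γ).dSt = Dir.right →
      M.dv (M.δ q σ γ).wr = min (M.dv γ + if Even (M.dv γ) then 1 else 2) k) ∧
    (M.dv γ < k → (M.δ q σ γ).dSt = Dir.left →
      M.dv (M.δ q σ γ).wr = min (M.dv γ + if Even (M.dv γ) then 2 else 1) k) ∧
    (M.dv (M.δ q σ γ).wr = k → (M.δ q σ γ).wr = M.lend ∨ (M.δ q σ γ).wr = M.blank)

/-- Depth-susceptibility: while scanning a storage symbol of depth
`≥ k-1` the input head is stationary, and while scanning the frozen
blank the inner state does not change. -/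
def DepthSusceptible (M : SDA k α) : Prop :=
  ∀ q σ γ,
    (k - 1 ≤ M.dv γ → (M.δ q σ γ).dIn = Dir.stay) ∧
    (γ = M.blank → (M.δ q σ γ).st = q)

end SDA

/-- The family `kSDA` of languages recognized by depth-susceptible k-sda's. -/
def kSDA (k : ℕ) (α : Type) : Set (Language α) :=
  {L | ∃ M : SDA k α, M.WellFormed ∧ M.DepthSusceptible ∧ M.Recognizes L}

/-- The family `kSDA_imm` of languages recognized by polynomial-time
depth-immune k-sda's (no behavioral restriction at high-depth symbols). -/
def kSDAimm (k : ℕ) (α : Type) : Set (Language α) :=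
  {L | ∃ M : SDA k α, M.WellFormed ∧ M.PolyTime ∧ M.Recognizes L}

/-! ### One-way deterministic pushdown automata and DCFL -/

/-- A deterministic pushdown automaton (acceptance by final state with the
whole input consumed). `δε` gives ε-moves, `δ` gives reading moves; on a
transition the top stack symbol is replaced by a string. -/
structure DPDA (α : Type) where
  Q : ℕ
  G : ℕ
  q0 : Fin Q
  Z0 : Fin G
  qacc : Finset (Fin Q)
  δε : Fin Q → Fin G → Option (Fin Q × List (Fin G))
  δ : Fin Q → α → Fin G → Option (Fin Q × List (Fin G))

namespace DPDA

variable {α : Type}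

structure Cfg (P : DPDA α) where
  st : Fin P.Q
  input : List α
  stack : List (Fin P.G)

def init (P : DPDA α) (x : List α) : P.Cfg := ⟨P.q0, x, [P.Z0]⟩

def step (P : DPDA α) (c : P.Cfg) : P.Cfg :=
  match c.stack with
  | [] => c
  | Z :: ζ =>
    match P.δε c.st Z with
    | some (p, γ) => ⟨p, c.input, γ ++ ζ⟩
    | none =>
      match c.input with
      | [] => c
      | a :: w =>
        match P.δ c.st a Z with
        | some (p, γ) => ⟨p, w, γ ++ ζ⟩
        | none => c

/-- Determinism: an ε-move and a reading move are never both available. -/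
def Deterministic (P : DPDA α) : Prop :=
  ∀ q Z, (P.δε q Z).isSome → ∀ a, P.δ q a Z = none

def Accepts (P : DPDA α) (x : List α) : Prop :=
  ∃ t, (P.step^[t] (P.init x)).input = [] ∧ (P.step^[t] (P.init x)).st ∈ P.qacc

end DPDA

/-- The deterministic context-free languages. -/
def DCFL (α : Type) : Set (Language α) :=
  {L | ∃ P : DPDA α, P.Deterministic ∧ ∀ x, x ∈ L ↔ P.Accepts x}

/-! ### Offline deterministic Turing machines; SC^k and P -/

structure TMOut (Q W : ℕ) where
  st : Fin Q
  wr : Fin W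
  dIn : Dir
  dW : Dir

/-- A deterministic Turing machine with a two-way read-only input tape and
one semi-infinite rewritable work tape. -/
structure OffTM (α : Type) where
  Q : ℕ
  W : ℕ
  q0 : Fin Q
  blank : Fin W
  qacc : Finset (Fin Q)
  qrej : Finset (Fin Q)
  δ : Fin Q → InSym α → Fin W → TMOut Q W

namespace OffTM

variable {α : Type}

structure Cfg (M : OffTM α) where
  st : Fin M.Q
  ip : ℕ
  wp : ℕ
  w : ℕ → Fin M.W

def init (M : OffTM α) : M.Cfg := ⟨M.q0, 0, 0, fun _ => M.blank⟩

def Halted (M : OffTM α) (c : M.Cfg) : Prop := c.st ∈ M.qacc ∨ c.st ∈ M.qrej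

def step (M : OffTM α) (x : List α) (c : M.Cfg) : M.Cfg :=
  if c.st ∈ M.qacc ∨ c.st ∈ M.qrej then c
  else
    let t := M.δ c.st (inAt x c.ip) (c.w c.wp)
    ⟨t.st, moveIn x.length c.ip t.dIn, moveNat c.wp t.dW,
      Function.update c.w c.wp t.wr⟩

def run (M : OffTM α) (x : List α) (t : ℕ) : M.Cfg := (M.step x)^[t] M.init

def Accepts (M : OffTM α) (x : List α) : Prop := ∃ t, (M.run x t).st ∈ M.qacc

end OffTM

/-- Steve's class `SC^k`: languages decided by deterministic Turing machines
simultaneously in polynomial time and `O(log^k n)` space. -/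
def SCk (k : ℕ) (α : Type) : Set (Language α) :=
  {L | ∃ M : OffTM α, ∃ c : ℕ,
    (∀ x : List α, ∃ t ≤ c * x.length ^ c + c, M.Halted (M.run x t)) ∧
    (∀ x, x ∈ L ↔ M.Accepts x) ∧
    (∀ (x : List α) (t : ℕ), (M.run x t).wp + 1 ≤ c * (Nat.log 2 x.length) ^ k + c)}

/-- `SC = ⋃_{k ≥ 1} SC^k`. -/
def SC (α : Type) : Set (Language α) := {L | ∃ k, 1 ≤ k ∧ L ∈ SCk k α}

/-- Polynomial time. -/
def Pclass (α : Type) : Set (Language α) :=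
  {L | ∃ M : OffTM α, ∃ c : ℕ,
    (∀ x : List α, ∃ t ≤ c * x.length ^ c + c, M.Halted (M.run x t)) ∧
    (∀ x, x ∈ L ↔ M.Accepts x)}

/-! ### Function transducers; FL and logspace many-one reductions -/

structure TTMOut (Q W : ℕ) (β : Type) where
  st : Fin Q
  wr : Fin W
  dIn : Dir
  dW : Dir
  out : Option β

/-- A deterministic Turing machine computing a function: a two-way read-only
input tape, one work tape, and a write-once output tape. -/
structure TransTM (α β : Type) where
  Q : ℕ
  W : ℕ
  q0 : Fin Q
  blank : Fin W
  qhalt : Finset (Fin Q)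
  δ : Fin Q → InSym α → Fin W → TTMOut Q W β

namespace TransTM

variable {α β : Type}

structure Cfg (M : TransTM α β) where
  st : Fin M.Q
  ip : ℕ
  wp : ℕ
  w : ℕ → Fin M.W
  out : List β

def init (M : TransTM α β) : M.Cfg := ⟨M.q0, 0, 0, fun _ => M.blank, []⟩

def step (M : TransTM α β) (x : List α) (c : M.Cfg) : M.Cfg :=
  if c.st ∈ M.qhalt then c
  else
    let t := M.δ c.st (inAt x c.ip) (c.w c.wp)
    ⟨t.st, moveIn x.length c.ip t.dIn, moveNat c.wp t.dW,
      Function.update c.w c.wp t.wr, c.out ++ t.out.toList⟩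

def run (M : TransTM α β) (x : List α) (t : ℕ) : M.Cfg := (M.step x)^[t] M.init

def Computes (M : TransTM α β) (f : List α → List β) : Prop :=
  ∀ x, ∃ t, (M.run x t).st ∈ M.qhalt ∧ (M.run x t).out = f x

def PolyTime (M : TransTM α β) : Prop :=
  ∃ c : ℕ, ∀ x : List α, ∃ t ≤ c * x.length ^ c + c, (M.run x t).st ∈ M.qhalt

def LogSpace (M : TransTM α β) : Prop :=
  ∃ c : ℕ, ∀ (x : List α) (t : ℕ), (M.run x t).wp + 1 ≤ c * Nat.log 2 x.length + c

end TransTM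

/-- `FL`: functions computable in polynomial time and `O(log n)` space. -/
def InFL {α β : Type} (f : List α → List β) : Prop :=
  ∃ M : TransTM α β, M.Computes f ∧ M.PolyTime ∧ M.LogSpace

/-- Logarithmic-space many-one reducibility `≤^L_m`. -/
def LmRed {α β : Type} (L₁ : Language α) (L₂ : Language β) : Prop :=
  ∃ f : List α → List β, InFL f ∧ ∀ x, x ∈ L₁ ↔ f x ∈ L₂

/-- `LOGkSDA`: the closure of `kSDA` under `≤^L_m` (targets over a finite
alphabet, w.l.o.g. `Fin m`). -/
def LOGkSDA (k : ℕ) (α : Type) : Set (Language α) :=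
  {A | ∃ m : ℕ, ∃ B ∈ kSDA k (Fin m), LmRed A B}

/-- `LOGkSDA_imm`: the closure of `kSDA_imm` under `≤^L_m`. -/
def LOGkSDAimm (k : ℕ) (α : Type) : Set (Language α) :=
  {A | ∃ m : ℕ, ∃ B ∈ kSDAimm k (Fin m), LmRed A B}

/-- `LOGDCFL`: the closure of `DCFL` under `≤^L_m`. -/
def LOGDCFL (α : Type) : Set (Language α) :=
  {A | ∃ m : ℕ, ∃ B ∈ DCFL (Fin m), LmRed A B}

/-! ### Deterministic auxiliary depth-`k` storage automata -/

structure AuxOut (Q W G : ℕ) where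
  st : Fin Q
  wrW : Fin W
  wrG : Fin G
  dIn : Dir
  dW : Dir
  dSt : Dir

/-- A deterministic auxiliary depth-`k` storage automaton: a two-way
read-only input tape, a rewritable auxiliary work tape, and a depth-`k`
storage tape. -/
structure AuxSDA (k : ℕ) (α : Type) where
  Q : ℕ
  W : ℕ
  G : ℕ
  dv : Fin G → ℕ
  box : Fin G
  blank : Fin G
  lend : Fin G
  wblank : Fin W
  q0 : Fin Q
  qacc : Finset (Fin Q)
  qrej : Finset (Fin Q)
  δ : Fin Q → InSym α → Fin W → Fin G → AuxOut Q W G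

namespace AuxSDA

variable {k : ℕ} {α : Type}

structure Cfg (M : AuxSDA k α) where
  st : Fin M.Q
  ip : ℕ
  wp : ℕ
  sp : ℕ
  w : ℕ → Fin M.W
  tape : ℕ → Fin M.G

def init (M : AuxSDA k α) : M.Cfg :=
  ⟨M.q0, 0, 0, 0, fun _ => M.wblank, fun i => if i = 0 then M.lend else M.box⟩

def Halted (M : AuxSDA k α) (c : M.Cfg) : Prop := c.st ∈ M.qacc ∨ c.st ∈ M.qrej

def step (M : AuxSDA k α) (x : List α) (c : M.Cfg) : M.Cfg :=
  if c.st ∈ M.qacc ∨ c.st ∈ M.qrej then c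
  else
    let t := M.δ c.st (inAt x c.ip) (c.w c.wp) (c.tape c.sp)
    ⟨t.st, moveIn x.length c.ip t.dIn, moveNat c.wp t.dW, moveNat c.sp t.dSt,
      Function.update c.w c.wp t.wrW, Function.update c.tape c.sp t.wrG⟩

def run (M : AuxSDA k α) (x : List α) (t : ℕ) : M.Cfg := (M.step x)^[t] M.init

def Accepts (M : AuxSDA k α) (x : List α) : Prop := ∃ t, (M.run x t).st ∈ M.qacc

def Rejects (M : AuxSDA k α) (x : List α) : Prop := ∃ t, (M.run x t).st ∈ M.qrej

def Recognizes (M : AuxSDA k α) (L : Language α) : Prop :=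
  ∀ x, (x ∈ L ↔ M.Accepts x) ∧ (x ∉ L ↔ M.Rejects x)

def PolyTime (M : AuxSDA k α) : Prop :=
  ∃ c : ℕ, ∀ x : List α, ∃ t ≤ c * x.length ^ c + c, M.Halted (M.run x t)

/-- The auxiliary work tape uses only `O(log n)` cells. -/
def LogSpace (M : AuxSDA k α) : Prop :=
  ∃ c : ℕ, ∀ (x : List α) (t : ℕ), (M.run x t).wp + 1 ≤ c * Nat.log 2 x.length + c

/-- Structural well-formedness: the depth-`k` requirement on the storage
tape and the stationary requirement. -/
def WellFormed (M : AuxSDA k α) : Prop :=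
  (∀ s, M.dv s ≤ k) ∧ M.dv M.box = 0 ∧ M.dv M.blank = k ∧ M.dv M.lend = k ∧
  M.blank ≠ M.lend ∧
  ∀ q σ τ γ,
    ((M.δ q σ τ γ).wrG = M.lend ↔ γ = M.lend) ∧
    (γ = M.lend → (M.δ q σ τ γ).dSt ≠ Dir.left) ∧
    (M.dv γ = k → (M.δ q σ τ γ).wrG = γ) ∧
    ((M.δ q σ τ γ).dSt = Dir.stay → (M.δ q σ τ γ).wrG = γ) ∧
    ((M.δ q σ τ γ).dW = Dir.stay → (M.δ q σ τ γ).wrW = τ) ∧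
    (M.dv γ < k → (M.δ q σ τ γ).dSt = Dir.right →
      M.dv (M.δ q σ τ γ).wrG = min (M.dv γ + if Even (M.dv γ) then 1 else 2) k) ∧
    (M.dv γ < k → (M.δ q σ τ γ).dSt = Dir.left →
      M.dv (M.δ q σ τ γ).wrG = min (M.dv γ + if Even (M.dv γ) then 2 else 1) k) ∧
    (M.dv (M.δ q σ τ γ).wrG = k →
      (M.δ q σ τ γ).wrG = M.lend ∨ (M.δ q σ τ γ).wrG = M.blank)

/-- Depth-susceptibility for auxiliary machines: while scanning a storage
symbol of depth `≥ k-1`, both the input head and the auxiliary head are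
stationary; while scanning the frozen blank, the inner state is unchanged. -/
def DepthSusceptible (M : AuxSDA k α) : Prop :=
  ∀ q σ τ γ,
    (k - 1 ≤ M.dv γ → (M.δ q σ τ γ).dIn = Dir.stay ∧ (M.δ q σ τ γ).dW = Dir.stay) ∧
    (γ = M.blank → (M.δ q σ τ γ).st = q)

end AuxSDA

/-! ### Two-way multi-head deterministic depth-`k` storage automata -/

structure MOut (Q G ℓ : ℕ) where
  st : Fin Q
  wr : Fin G
  dIn : Fin ℓ → Dir
  dSt : Dir

/-- A two-way `ℓ`-head deterministic depth-`k` storage automaton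
(`k`-sda₂(ℓ)): `ℓ` two-way read-only input heads and one depth-`k`
storage tape. -/
structure MSDA (k ℓ : ℕ) (α : Type) where
  Q : ℕ
  G : ℕ
  dv : Fin G → ℕ
  box : Fin G
  blank : Fin G
  lend : Fin G
  q0 : Fin Q
  qacc : Finset (Fin Q)
  qrej : Finset (Fin Q)
  δ : Fin Q → (Fin ℓ → InSym α) → Fin G → MOut Q G ℓ

namespace MSDA

variable {k ℓ : ℕ} {α : Type}

structure Cfg (M : MSDA k ℓ α) where
  st : Fin M.Q
  ips : Fin ℓ → ℕ
  sp : ℕ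
  tape : ℕ → Fin M.G

def init (M : MSDA k ℓ α) : M.Cfg :=
  ⟨M.q0, fun _ => 0, 0, fun i => if i = 0 then M.lend else M.box⟩

def Halted (M : MSDA k ℓ α) (c : M.Cfg) : Prop := c.st ∈ M.qacc ∨ c.st ∈ M.qrej

def step (M : MSDA k ℓ α) (x : List α) (c : M.Cfg) : M.Cfg :=
  if c.st ∈ M.qacc ∨ c.st ∈ M.qrej then c
  else
    let t := M.δ c.st (fun i => inAt x (c.ips i)) (c.tape c.sp)
    ⟨t.st, fun i => moveIn x.length (c.ips i) (t.dIn i), moveNat c.sp t.dSt,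
      Function.update c.tape c.sp t.wr⟩

def run (M : MSDA k ℓ α) (x : List α) (t : ℕ) : M.Cfg := (M.step x)^[t] M.init

def Accepts (M : MSDA k ℓ α) (x : List α) : Prop := ∃ t, (M.run x t).st ∈ M.qacc

def Rejects (M : MSDA k ℓ α) (x : List α) : Prop := ∃ t, (M.run x t).st ∈ M.qrej

def Halts (M : MSDA k ℓ α) (x : List α) : Prop := ∃ t, M.Halted (M.run x t)

def Recognizes (M : MSDA k ℓ α) (L : Language α) : Prop :=
  ∀ x, (x ∈ L ↔ M.Accepts x) ∧ (x ∉ L ↔ M.Rejects x)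

def PolyTime (M : MSDA k ℓ α) : Prop :=
  ∃ c : ℕ, ∀ x : List α, ∃ t ≤ c * x.length ^ c + c, M.Halted (M.run x t)

def WellFormed (M : MSDA k ℓ α) : Prop :=
  (∀ s, M.dv s ≤ k) ∧ M.dv M.box = 0 ∧ M.dv M.blank = k ∧ M.dv M.lend = k ∧
  M.blank ≠ M.lend ∧
  ∀ q σ γ,
    ((M.δ q σ γ).wr = M.lend ↔ γ = M.lend) ∧
    (γ = M.lend → (M.δ q σ γ).dSt ≠ Dir.left) ∧
    (M.dv γ = k → (M.δ q σ γ).wr = γ) ∧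
    ((M.δ q σ γ).dSt = Dir.stay → (M.δ q σ γ).wr = γ) ∧
    (M.dv γ < k → (M.δ q σ γ).dSt = Dir.right →
      M.dv (M.δ q σ γ).wr = min (M.dv γ + if Even (M.dv γ) then 1 else 2) k) ∧
    (M.dv γ < k → (M.δ q σ γ).dSt = Dir.left →
      M.dv (M.δ q σ γ).wr = min (M.dv γ + if Even (M.dv γ) then 2 else 1) k) ∧
    (M.dv (M.δ q σ γ).wr = k → (M.δ q σ γ).wr = M.lend ∨ (M.δ q σ γ).wr = M.blank)

/-- Depth-susceptibility: all input heads are stationary while the storage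
head scans a symbol of depth `≥ k-1`, and the state is unchanged while
scanning the frozen blank. -/
def DepthSusceptible (M : MSDA k ℓ α) : Prop :=
  ∀ q σ γ,
    (k - 1 ≤ M.dv γ → ∀ i, (M.δ q σ γ).dIn i = Dir.stay) ∧
    (γ = M.blank → (M.δ q σ γ).st = q)

/-- Head `h` is a counter head: the transition function ignores the symbol
it scans, and the storage-tape head stays still whenever head `h` moves. -/
def CounterHead (M : MSDA k ℓ α) (h : Fin ℓ) : Prop :=
  (∀ q σ σ' γ, (∀ i, i ≠ h → σ i = σ' i) → M.δ q σ γ = M.δ q σ' γ) ∧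
  (∀ q σ γ, (M.δ q σ γ).dIn h ≠ Dir.stay → (M.δ q σ γ).dSt = Dir.stay)

/-- Head `h` never moves to the left. -/
def OneWayHead (M : MSDA k ℓ α) (h : Fin ℓ) : Prop :=
  ∀ q σ γ, (M.δ q σ γ).dIn h ≠ Dir.left

end MSDA

/-- `kSDA₂(ℓ)`: languages recognized in polynomial time by depth-immune
two-way `ℓ`-head deterministic depth-`k` storage automata. -/
def kSDA2 (k ℓ : ℕ) (α : Type) : Set (Language α) :=
  {L | ∃ M : MSDA k ℓ α, M.WellFormed ∧ M.PolyTime ∧ M.Recognizes L}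

/-! ### Hibbard's deterministic k-limited automata -/

structure LDAOut (Q G : ℕ) where
  st : Fin Q
  wr : Fin G
  d : Dir

/-- A deterministic `k`-limited automaton: a single-tape two-way machine
whose tape initially holds `▷ x ◁`; each cell may be rewritten only during
its first `k` visits (a turn counts twice), tracked by the graded tape
alphabet. -/
structure LDA (k : ℕ) (α : Type) where
  Q : ℕ
  G : ℕ
  dv : Fin G → ℕ
  embed : α → Fin G     -- input symbols, of depth 0
  lend : Fin G          -- `▷`, frozen
  rend : Fin G          -- `◁`, frozen
  q0 : Fin Q
  qacc : Finset (Fin Q)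
  qrej : Finset (Fin Q)
  δ : Fin Q → Fin G → LDAOut Q G

namespace LDA

variable {k : ℕ} {α : Type}

structure Cfg (M : LDA k α) where
  st : Fin M.Q
  p : ℕ
  tape : ℕ → Fin M.G

def init (M : LDA k α) (x : List α) : M.Cfg :=
  ⟨M.q0, 0, fun i =>
    if i = 0 then M.lend
    else if h : i - 1 < x.length then M.embed (x.get ⟨i - 1, h⟩)
    else M.rend⟩

def Halted (M : LDA k α) (c : M.Cfg) : Prop := c.st ∈ M.qacc ∨ c.st ∈ M.qrej

def step (M : LDA k α) (c : M.Cfg) : M.Cfg :=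
  if c.st ∈ M.qacc ∨ c.st ∈ M.qrej then c
  else
    let t := M.δ c.st (c.tape c.p)
    ⟨t.st, moveNat c.p t.d, Function.update c.tape c.p t.wr⟩

def run (M : LDA k α) (x : List α) (t : ℕ) : M.Cfg := M.step^[t] (M.init x)

def Accepts (M : LDA k α) (x : List α) : Prop := ∃ t, (M.run x t).st ∈ M.qacc

def Rejects (M : LDA k α) (x : List α) : Prop := ∃ t, (M.run x t).st ∈ M.qrej

def Recognizes (M : LDA k α) (L : Language α) : Prop :=
  ∀ x, (x ∈ L ↔ M.Accepts x) ∧ (x ∉ L ↔ M.Rejects x)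

def WellFormed (M : LDA k α) : Prop :=
  (∀ s, M.dv s ≤ k) ∧ (∀ a, M.dv (M.embed a) = 0) ∧
  M.dv M.lend = k ∧ M.dv M.rend = k ∧ M.lend ≠ M.rend ∧
  ∀ q γ,
    ((M.δ q γ).wr = M.lend ↔ γ = M.lend) ∧
    ((M.δ q γ).wr = M.rend ↔ γ = M.rend) ∧
    (γ = M.lend → (M.δ q γ).d ≠ Dir.left) ∧
    (γ = M.rend → (M.δ q γ).d ≠ Dir.right) ∧
    (M.dv γ = k → (M.δ q γ).wr = γ) ∧
    ((M.δ q γ).d = Dir.stay → (M.δ q γ).wr = γ) ∧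
    (M.dv γ < k → (M.δ q γ).d = Dir.right →
      M.dv (M.δ q γ).wr = min (M.dv γ + if Even (M.dv γ) then 1 else 2) k) ∧
    (M.dv γ < k → (M.δ q γ).d = Dir.left →
      M.dv (M.δ q γ).wr = min (M.dv γ + if Even (M.dv γ) then 2 else 1) k)

end LDA

/-! ### Encodings of k-sda's and the membership problem MEMB_k -/

/-- An encoding scheme: a map sending every depth-susceptible k-sda over an
alphabet `Fin a` together with an input to a binary string. -/
def EncInjective {k : ℕ}
    (enc : (a : ℕ) → SDA k (Fin a) → List (Fin a) → List Bool) : Prop :=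
  Function.Injective
    (fun p : (a : ℕ) × (SDA k (Fin a) × List (Fin a)) => enc p.1 p.2.1 p.2.2)

/-- The membership problem `MEMB_k` relative to an encoding scheme. -/
def MEMB (k : ℕ)
    (enc : (a : ℕ) → SDA k (Fin a) → List (Fin a) → List Bool) : Language Bool :=
  {y | ∃ (a : ℕ) (M : SDA k (Fin a)) (x : List (Fin a)),
    M.WellFormed ∧ M.DepthSusceptible ∧ y = enc a M x ∧ M.Accepts x}

end SDAP

/-! ### Auxiliary development for the proof -/

namespace SDAP

noncomputable section

instance : DecidableEq Dir := fun a b => by cases a <;> cases b <;>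
  first | exact isTrue rfl | exact isFalse (by simp)

instance : Fintype Dir :=
  ⟨{Dir.left, Dir.stay, Dir.right}, fun x => by cases x <;> simp⟩

def sdaOutEquiv (Q G : ℕ) : SDAOut Q G ≃ Fin Q × Fin G × Dir × Dir where
  toFun o := (o.st, o.wr, o.dIn, o.dSt)
  invFun p := ⟨p.1, p.2.1, p.2.2.1, p.2.2.2⟩
  left_inv o := rfl
  right_inv p := rfl

instance (Q G : ℕ) : Fintype (SDAOut Q G) := Fintype.ofEquiv _ (sdaOutEquiv Q G).symm

section Machines

variable {k : ℕ} {α β : Type} (T : TransTM α β) (M : SDA k β)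

/-- Certified input-symbol behaviors of `M`. -/
def Beh : Type :=
  {d : Fin M.Q → Fin M.G → SDAOut M.Q M.G // ∃ σ : InSym β, ∀ q γ, d q γ = M.δ q σ γ}

noncomputable instance : Fintype (Beh M) :=
  @Subtype.fintype _ _ (fun _ => Classical.propDecidable _) _

def behOf (σ : InSym β) : Beh M := ⟨fun q γ => M.δ q σ γ, ⟨σ, fun _ _ => rfl⟩⟩

/-- Phases of the simulation. -/
inductive Ph (B : Type) : Type
  | ready
  | fetch
  | ret (nxt : Option B)
  | commit (d : B)

def phEquiv (B : Type) : Ph B ≃ (Bool ⊕ Option B ⊕ B) where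
  toFun p := match p with
    | .ready => .inl true
    | .fetch => .inl false
    | .ret o => .inr (.inl o)
    | .commit d => .inr (.inr d)
  invFun s := match s with
    | .inl true => .ready
    | .inl false => .fetch
    | .inr (.inl o) => .ret o
    | .inr (.inr d) => .commit d
  left_inv p := by cases p <;> rfl
  right_inv s := by rcases s with (_ | _) | o | d <;> rfl

noncomputable instance (B : Type) [Fintype B] : Fintype (Ph B) :=
  Fintype.ofEquiv _ (phEquiv B).symm

def NSt : Type := Ph (Beh M) × Fin T.Q × Fin M.Q × Beh M

noncomputable instance : Fintype (NSt T M) := by unfold NSt; infer_instance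

noncomputable def eN : NSt T M ≃ Fin (Fintype.card (NSt T M)) := Fintype.equivFin _

structure Pre (T : TransTM α β) (M : SDA k β) where
  st : NSt T M
  wrW : Fin T.W
  wrG : Fin M.G
  dIn : Dir
  dW : Dir
  dSt : Dir

open Classical in
/-- The transition of the simulating machine, on decoded states. -/
def trans : NSt T M → InSym α → Fin T.W → Fin M.G → Pre T M
  | (Ph.ready, qT, qM, cur), _, τ, γ =>
      let tr := cur.1 qM γ
      if tr.dIn = Dir.right then ⟨(Ph.fetch, qT, qM, cur), τ, γ, .stay, .stay, .stay⟩
      else ⟨(Ph.ready, qT, tr.st, cur), τ, tr.wr, .stay, .stay, tr.dSt⟩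
  | (Ph.commit d, qT, qM, cur), _, τ, γ =>
      if γ = M.blank then ⟨(Ph.commit d, qT, qM, cur), τ, γ, .stay, .stay, .stay⟩
      else
        let tr := cur.1 qM γ
        ⟨(Ph.ready, qT, tr.st, d), τ, tr.wr, .stay, .stay, tr.dSt⟩
  | (Ph.fetch, qT, qM, cur), σ, τ, γ =>
      if k - 1 ≤ M.dv γ then ⟨(Ph.fetch, qT, qM, cur), τ, γ, .stay, .stay, .stay⟩
      else if qT ∈ T.qhalt then
        ⟨(Ph.commit (behOf M InSym.rend), qT, qM, cur), τ, γ, .stay, .stay, .stay⟩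
      else
        let u := T.δ qT σ τ
        if u.dW = Dir.stay then
          ⟨(Ph.ret (u.out.map fun b => behOf M (InSym.sym b)), u.st, qM, cur),
            u.wr, γ, u.dIn, .right, .stay⟩
        else
          ⟨((match u.out with
              | none => Ph.fetch
              | some b => Ph.commit (behOf M (InSym.sym b))), u.st, qM, cur),
            u.wr, γ, u.dIn, u.dW, .stay⟩
  | (Ph.ret nxt, qT, qM, cur), _, τ, γ =>
      if k - 1 ≤ M.dv γ then ⟨(Ph.ret nxt, qT, qM, cur), τ, γ, .stay, .stay, .stay⟩
      else
        ⟨((match nxt with | none => Ph.fetch | some d => Ph.commit d), qT, qM, cur),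
          τ, γ, .stay, .left, .stay⟩

open Classical in
/-- The simulating auxiliary depth-`k` storage automaton. -/
noncomputable def NN : AuxSDA k α where
  Q := Fintype.card (NSt T M)
  W := T.W
  G := M.G
  dv := M.dv
  box := M.box
  blank := M.blank
  lend := M.lend
  wblank := T.blank
  q0 := eN T M (Ph.ready, T.q0, M.q0, behOf M InSym.lend)
  qacc := Finset.univ.filter (fun q => ((eN T M).symm q).2.2.1 ∈ M.qacc)
  qrej := Finset.univ.filter
    (fun q => ((eN T M).symm q).2.2.1 ∈ M.qrej ∧ ((eN T M).symm q).2.2.1 ∉ M.qacc)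
  δ := fun q σ τ γ =>
    let o := trans T M ((eN T M).symm q) σ τ γ
    ⟨eN T M o.st, o.wrW, o.wrG, o.dIn, o.dW, o.dSt⟩

/-! #### Basic run lemmas -/

theorem SDA.run_succ (y : List β) (t : ℕ) :
    M.run y (t + 1) = M.step y (M.run y t) := Function.iterate_succ_apply' _ _ _

theorem TransTM.run_succ (x : List α) (t : ℕ) :
    T.run x (t + 1) = T.step x (T.run x t) := Function.iterate_succ_apply' _ _ _

theorem AuxSDA.run_succ (N : AuxSDA k α) (x : List α) (t : ℕ) :
    N.run x (t + 1) = N.step x (N.run x t) := Function.iterate_succ_apply' _ _ _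

theorem M_frozen {y : List β} {s : ℕ} (h : M.Halted (M.run y s)) :
    ∀ {u : ℕ}, s ≤ u → M.run y u = M.run y s := by
  have key : ∀ j, M.run y (s + j) = M.run y s := by
    intro j; induction j with
    | zero => rfl
    | succ j ih =>
      rw [← Nat.add_assoc, SDA.run_succ, ih]
      exact if_pos h
  intro u hu
  obtain ⟨j, rfl⟩ := Nat.exists_eq_add_of_le hu
  exact key j

theorem T_frozen {x : List α} {s : ℕ} (h : (T.run x s).st ∈ T.qhalt) :
    ∀ {u : ℕ}, s ≤ u → T.run x u = T.run x s := by
  have key : ∀ j, T.run x (s + j) = T.run x s := by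
    intro j; induction j with
    | zero => rfl
    | succ j ih =>
      rw [← Nat.add_assoc, TransTM.run_succ, ih]
      exact if_pos h
  intro u hu
  obtain ⟨j, rfl⟩ := Nat.exists_eq_add_of_le hu
  exact key j

theorem N_frozen (N : AuxSDA k α) {x : List α} {s : ℕ} (h : N.Halted (N.run x s)) :
    ∀ {u : ℕ}, s ≤ u → N.run x u = N.run x s := by
  have key : ∀ j, N.run x (s + j) = N.run x s := by
    intro j; induction j with
    | zero => rfl
    | succ j ih =>
      rw [← Nat.add_assoc, AuxSDA.run_succ, ih]
      exact if_pos h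
  intro u hu
  obtain ⟨j, rfl⟩ := Nat.exists_eq_add_of_le hu
  exact key j

theorem M_halt_eq {y : List β} {s u : ℕ} (hs : M.Halted (M.run y s))
    (hu : M.Halted (M.run y u)) : M.run y s = M.run y u := by
  rcases le_total s u with h | h
  · exact (M_frozen M hs h).symm
  · exact M_frozen M hu h

theorem M_not_halted_lt {y : List β} {s u : ℕ} (hu : M.Halted (M.run y u))
    (hs : ¬ M.Halted (M.run y s)) : s < u := by
  by_contra h
  exact hs (by rw [M_frozen M hu (le_of_not_gt h)]; exact hu)

theorem T_not_halted_lt {x : List α} {s u : ℕ} (hu : (T.run x u).st ∈ T.qhalt)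
    (hs : ¬ (T.run x s).st ∈ T.qhalt) : s < u := by
  by_contra h
  exact hs (by rw [T_frozen T hu (le_of_not_gt h)]; exact hu)

theorem T_out_succ (x : List α) (t : ℕ) :
    (T.run x t).out <+: (T.run x (t + 1)).out := by
  rw [TransTM.run_succ]
  unfold TransTM.step
  split
  · exact List.prefix_refl _
  · exact List.prefix_append _ _

theorem T_out_mono (x : List α) {s u : ℕ} (h : s ≤ u) :
    (T.run x s).out <+: (T.run x u).out := by
  obtain ⟨j, rfl⟩ := Nat.exists_eq_add_of_le h
  clear h
  induction j with
  | zero => exact List.prefix_refl _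
  | succ j ih => exact ih.trans (by rw [← Nat.add_assoc]; exact T_out_succ T x _)

theorem T_out_len (x : List α) (t : ℕ) : (T.run x t).out.length ≤ t := by
  induction t with
  | zero => exact Nat.le_refl 0
  | succ t ih =>
    rw [TransTM.run_succ]
    unfold TransTM.step
    split
    · exact ih.trans (Nat.le_succ t)
    · show ((T.run x t).out ++ _).length ≤ t + 1
      rw [List.length_append]
      have : (Option.toList ((T.δ (T.run x t).st (inAt x (T.run x t).ip)
          ((T.run x t).w (T.run x t).wp)).out)).length ≤ 1 := by
        cases (T.δ (T.run x t).st (inAt x (T.run x t).ip)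
          ((T.run x t).w (T.run x t).wp)).out <;> simp
      omega

theorem T_out_halt {f : List α → List β} (hfc : T.Computes f) {x : List α} {s : ℕ}
    (h : (T.run x s).st ∈ T.qhalt) : (T.run x s).out = f x := by
  obtain ⟨u, hu, hout⟩ := hfc x
  rcases le_total s u with hle | hle
  · rw [T_frozen T h hle] at hout; exact hout
  · rw [T_frozen T hu hle, hout]

theorem T_out_prefix {f : List α → List β} (hfc : T.Computes f) (x : List α) (s : ℕ) :
    (T.run x s).out <+: f x := by
  obtain ⟨u, hu, hout⟩ := hfc x
  rcases le_total s u with hle | hle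
  · exact (T_out_mono T x hle).trans (hout ▸ List.prefix_refl _)
  · rw [T_frozen T hu hle, hout]

theorem M_ip_le (y : List β) (t : ℕ) : (M.run y t).ip ≤ y.length + 1 := by
  induction t with
  | zero => exact Nat.zero_le _
  | succ t ih =>
    rw [SDA.run_succ]
    unfold SDA.step
    split
    · exact ih
    · exact min_le_right _ _

theorem T_ip_le (x : List α) (t : ℕ) : (T.run x t).ip ≤ x.length + 1 := by
  induction t with
  | zero => exact Nat.zero_le _
  | succ t ih =>
    rw [TransTM.run_succ]
    unfold TransTM.step
    split
    · exact ih
    · exact min_le_right _ _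

/-- Any depth-`k` symbol of a well-formed `M` is `▷` or `B`. -/
theorem dv_eq_k (hwf : M.WellFormed) : ∀ γ, M.dv γ = k → γ = M.lend ∨ γ = M.blank := by
  intro γ hγ
  obtain ⟨_, _, _, _, _, hδ⟩ := hwf
  obtain ⟨_, _, _, h4, _, _, _, h8⟩ := hδ M.q0 InSym.lend γ
  have := h8 (by rw [h4 hγ]; exact hγ)
  rwa [h4 hγ] at this

/-! #### Structural properties of the simulator -/

theorem trans_spec (hwf : M.WellFormed) (hds : M.DepthSusceptible)
    (s : NSt T M) (σ : InSym α) (τ : Fin T.W) (γ : Fin M.G) :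
    ((trans T M s σ τ γ).wrG = M.lend ↔ γ = M.lend) ∧
    (γ = M.lend → (trans T M s σ τ γ).dSt ≠ Dir.left) ∧
    (M.dv γ = k → (trans T M s σ τ γ).wrG = γ) ∧
    ((trans T M s σ τ γ).dSt = Dir.stay → (trans T M s σ τ γ).wrG = γ) ∧
    ((trans T M s σ τ γ).dW = Dir.stay → (trans T M s σ τ γ).wrW = τ) ∧
    (M.dv γ < k → (trans T M s σ τ γ).dSt = Dir.right →
      M.dv (trans T M s σ τ γ).wrG = min (M.dv γ + if Even (M.dv γ) then 1 else 2) k) ∧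
    (M.dv γ < k → (trans T M s σ τ γ).dSt = Dir.left →
      M.dv (trans T M s σ τ γ).wrG = min (M.dv γ + if Even (M.dv γ) then 2 else 1) k) ∧
    (M.dv (trans T M s σ τ γ).wrG = k →
      (trans T M s σ τ γ).wrG = M.lend ∨ (trans T M s σ τ γ).wrG = M.blank) ∧
    (k - 1 ≤ M.dv γ → (trans T M s σ τ γ).dIn = Dir.stay ∧ (trans T M s σ τ γ).dW = Dir.stay) ∧
    (γ = M.blank → (trans T M s σ τ γ).st = s) := by
  obtain ⟨ph, qT, qM, cur⟩ := s
  obtain ⟨σ', hσ'⟩ := cur.2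
  have hK := dv_eq_k M hwf
  obtain ⟨hle, hbox, hblank, hlend, hbl, hδ⟩ := hwf
  have hKγ : M.dv γ = k → γ = M.lend ∨ γ = M.blank := hK γ
  have hblk : γ = M.blank → k - 1 ≤ M.dv γ := by
    rintro rfl; rw [hblank]; omega
  have hcur : cur.1 qM γ = M.δ qM σ' γ := hσ' qM γ
  cases ph with
  | ready =>
    obtain ⟨m1, m2, m3, m4, m5, m6, m7, m8⟩ := hδ qM σ' γ
    by_cases hdir : (M.δ qM σ' γ).dIn = Dir.right
    · have ht : trans T M (Ph.ready, qT, qM, cur) σ τ γ =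
          ⟨(Ph.fetch, qT, qM, cur), τ, γ, .stay, .stay, .stay⟩ := by
        simp only [trans, hcur]; rw [if_pos hdir]
      rw [ht]
      refine ⟨Iff.rfl, fun _ h => by simp at h, fun _ => rfl, fun _ => rfl, fun _ => rfl,
        fun _ h => by simp at h, fun _ h => by simp at h, fun h => hKγ h,
        fun _ => ⟨rfl, rfl⟩, ?_⟩
      rintro rfl
      have hst := (hds qM σ' M.blank).1 (by rw [hblank]; omega)
      rw [hst] at hdir
      simp at hdir
    · have ht : trans T M (Ph.ready, qT, qM, cur) σ τ γ =
          ⟨(Ph.ready, qT, (M.δ qM σ' γ).st, cur), τ, (M.δ qM σ' γ).wr,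
            .stay, .stay, (M.δ qM σ' γ).dSt⟩ := by
        simp only [trans, hcur]; rw [if_neg hdir]
      rw [ht]
      refine ⟨m2, fun h => m3 h, fun h => m4 h, m5, fun _ => rfl, m6, m7, m8,
        fun _ => ⟨rfl, rfl⟩, ?_⟩
      rintro rfl
      show (Ph.ready, qT, (M.δ qM σ' M.blank).st, cur) = (Ph.ready, qT, qM, cur)
      rw [(hds qM σ' M.blank).2 rfl]
  | fetch =>
    by_cases hguard : k - 1 ≤ M.dv γ
    · have ht : trans T M (Ph.fetch, qT, qM, cur) σ τ γ =
          ⟨(Ph.fetch, qT, qM, cur), τ, γ, .stay, .stay, .stay⟩ := by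
        simp only [trans]; rw [if_pos hguard]
      rw [ht]
      exact ⟨Iff.rfl, fun _ h => by simp at h, fun _ => rfl, fun _ => rfl, fun _ => rfl,
        fun _ h => by simp at h, fun _ h => by simp at h, fun h => hKγ h,
        fun _ => ⟨rfl, rfl⟩, fun _ => rfl⟩
    · by_cases hhalt : qT ∈ T.qhalt
      · have ht : trans T M (Ph.fetch, qT, qM, cur) σ τ γ =
            ⟨(Ph.commit (behOf M InSym.rend), qT, qM, cur), τ, γ, .stay, .stay, .stay⟩ := by
          simp only [trans]; rw [if_neg hguard, if_pos hhalt]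
        rw [ht]
        exact ⟨Iff.rfl, fun _ h => by simp at h, fun _ => rfl, fun _ => rfl, fun _ => rfl,
          fun _ h => by simp at h, fun _ h => by simp at h, fun h => hKγ h,
          fun h => absurd h hguard, fun h => absurd (hblk h) hguard⟩
      · by_cases hdw : (T.δ qT σ τ).dW = Dir.stay
        · have ht : trans T M (Ph.fetch, qT, qM, cur) σ τ γ =
              ⟨(Ph.ret ((T.δ qT σ τ).out.map fun b => behOf M (InSym.sym b)),
                  (T.δ qT σ τ).st, qM, cur),
                (T.δ qT σ τ).wr, γ, (T.δ qT σ τ).dIn, .right, .stay⟩ := by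
            simp only [trans]; rw [if_neg hguard, if_neg hhalt, if_pos hdw]
          rw [ht]
          exact ⟨Iff.rfl, fun _ h => by simp at h, fun _ => rfl, fun _ => rfl,
            fun h => by simp at h, fun _ h => by simp at h, fun _ h => by simp at h,
            fun h => hKγ h, fun h => absurd h hguard, fun h => absurd (hblk h) hguard⟩
        · have ht : trans T M (Ph.fetch, qT, qM, cur) σ τ γ =
              ⟨((match (T.δ qT σ τ).out with
                  | none => Ph.fetch
                  | some b => Ph.commit (behOf M (InSym.sym b))), (T.δ qT σ τ).st, qM, cur),
                (T.δ qT σ τ).wr, γ, (T.δ qT σ τ).dIn, (T.δ qT σ τ).dW, .stay⟩ := by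
            simp only [trans]; rw [if_neg hguard, if_neg hhalt, if_neg hdw]
          rw [ht]
          exact ⟨Iff.rfl, fun _ h => by simp at h, fun _ => rfl, fun _ => rfl,
            fun h => absurd h hdw, fun _ h => by simp at h, fun _ h => by simp at h,
            fun h => hKγ h, fun h => absurd h hguard, fun h => absurd (hblk h) hguard⟩
  | ret nxt =>
    by_cases hguard : k - 1 ≤ M.dv γ
    · have ht : trans T M (Ph.ret nxt, qT, qM, cur) σ τ γ =
          ⟨(Ph.ret nxt, qT, qM, cur), τ, γ, .stay, .stay, .stay⟩ := by
        simp only [trans]; rw [if_pos hguard]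
      rw [ht]
      exact ⟨Iff.rfl, fun _ h => by simp at h, fun _ => rfl, fun _ => rfl, fun _ => rfl,
        fun _ h => by simp at h, fun _ h => by simp at h, fun h => hKγ h,
        fun _ => ⟨rfl, rfl⟩, fun _ => rfl⟩
    · have ht : trans T M (Ph.ret nxt, qT, qM, cur) σ τ γ =
          ⟨((match nxt with | none => Ph.fetch | some d => Ph.commit d), qT, qM, cur),
            τ, γ, .stay, .left, .stay⟩ := by
        simp only [trans]; rw [if_neg hguard]
      rw [ht]
      exact ⟨Iff.rfl, fun _ h => by simp at h, fun _ => rfl, fun _ => rfl, fun _ => rfl,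
        fun _ h => by simp at h, fun _ h => by simp at h, fun h => hKγ h,
        fun h => absurd h hguard, fun h => absurd (hblk h) hguard⟩
  | commit d =>
    by_cases hbγ : γ = M.blank
    · have ht : trans T M (Ph.commit d, qT, qM, cur) σ τ γ =
          ⟨(Ph.commit d, qT, qM, cur), τ, γ, .stay, .stay, .stay⟩ := by
        simp only [trans]; rw [if_pos hbγ]
      rw [ht]
      exact ⟨Iff.rfl, fun _ h => by simp at h, fun _ => rfl, fun _ => rfl, fun _ => rfl,
        fun _ h => by simp at h, fun _ h => by simp at h, fun h => hKγ h,
        fun _ => ⟨rfl, rfl⟩, fun _ => rfl⟩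
    · obtain ⟨m1, m2, m3, m4, m5, m6, m7, m8⟩ := hδ qM σ' γ
      have ht : trans T M (Ph.commit d, qT, qM, cur) σ τ γ =
          ⟨(Ph.ready, qT, (M.δ qM σ' γ).st, d), τ, (M.δ qM σ' γ).wr,
            .stay, .stay, (M.δ qM σ' γ).dSt⟩ := by
        simp only [trans, hcur]; rw [if_neg hbγ]
      rw [ht]
      exact ⟨m2, fun h => m3 h, fun h => m4 h, m5, fun _ => rfl, m6, m7, m8,
        fun _ => ⟨rfl, rfl⟩, fun h => absurd h hbγ⟩

theorem NN_wf (hwf : M.WellFormed) (hds : M.DepthSusceptible) :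
    (NN T M).WellFormed := by
  refine ⟨hwf.1, hwf.2.1, hwf.2.2.1, hwf.2.2.2.1, hwf.2.2.2.2.1, ?_⟩
  intro q σ τ γ
  have H := trans_spec T M hwf hds ((eN T M).symm q) σ τ γ
  obtain ⟨h1, h2, h3, h4, h5, h6, h7, h8, _, _⟩ := H
  exact ⟨h1, h2, h3, h4, h5, h6, h7, h8⟩

theorem NN_ds (hwf : M.WellFormed) (hds : M.DepthSusceptible) :
    (NN T M).DepthSusceptible := by
  intro q σ τ γ
  have H := trans_spec T M hwf hds ((eN T M).symm q) σ τ γ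
  obtain ⟨_, _, _, _, _, _, _, _, h9, h10⟩ := H
  constructor
  · exact h9
  · intro hb
    show eN T M _ = q
    rw [h10 hb]; exact (eN T M).apply_symm_apply q

/-! #### Evaluation lemmas for `trans` -/

section TransEval

variable {qT : Fin T.Q} {qM : Fin M.Q} {cur : Beh M} {σ : InSym α} {τ : Fin T.W} {γ : Fin M.G}

theorem trans_ready_right (h : (cur.1 qM γ).dIn = Dir.right) :
    trans T M (Ph.ready, qT, qM, cur) σ τ γ =
      ⟨(Ph.fetch, qT, qM, cur), τ, γ, .stay, .stay, .stay⟩ := by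
  simp only [trans]; rw [if_pos h]

theorem trans_ready_stay (h : ¬ (cur.1 qM γ).dIn = Dir.right) :
    trans T M (Ph.ready, qT, qM, cur) σ τ γ =
      ⟨(Ph.ready, qT, (cur.1 qM γ).st, cur), τ, (cur.1 qM γ).wr,
        .stay, .stay, (cur.1 qM γ).dSt⟩ := by
  simp only [trans]; rw [if_neg h]

theorem trans_fetch_halt (hg : ¬ k - 1 ≤ M.dv γ) (hh : qT ∈ T.qhalt) :
    trans T M (Ph.fetch, qT, qM, cur) σ τ γ =
      ⟨(Ph.commit (behOf M InSym.rend), qT, qM, cur), τ, γ, .stay, .stay, .stay⟩ := by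
  simp only [trans]; rw [if_neg hg, if_pos hh]

theorem trans_fetch_stay (hg : ¬ k - 1 ≤ M.dv γ) (hh : qT ∉ T.qhalt)
    (hdw : (T.δ qT σ τ).dW = Dir.stay) :
    trans T M (Ph.fetch, qT, qM, cur) σ τ γ =
      ⟨(Ph.ret ((T.δ qT σ τ).out.map fun b => behOf M (InSym.sym b)), (T.δ qT σ τ).st, qM, cur),
        (T.δ qT σ τ).wr, γ, (T.δ qT σ τ).dIn, .right, .stay⟩ := by
  simp only [trans]; rw [if_neg hg, if_neg hh, if_pos hdw]

theorem trans_fetch_move (hg : ¬ k - 1 ≤ M.dv γ) (hh : qT ∉ T.qhalt)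
    (hdw : ¬ (T.δ qT σ τ).dW = Dir.stay) :
    trans T M (Ph.fetch, qT, qM, cur) σ τ γ =
      ⟨((match (T.δ qT σ τ).out with
          | none => Ph.fetch
          | some b => Ph.commit (behOf M (InSym.sym b))), (T.δ qT σ τ).st, qM, cur),
        (T.δ qT σ τ).wr, γ, (T.δ qT σ τ).dIn, (T.δ qT σ τ).dW, .stay⟩ := by
  simp only [trans]; rw [if_neg hg, if_neg hh, if_neg hdw]

theorem trans_ret_go {nxt : Option (Beh M)} (hg : ¬ k - 1 ≤ M.dv γ) :
    trans T M (Ph.ret nxt, qT, qM, cur) σ τ γ =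
      ⟨((match nxt with | none => Ph.fetch | some d => Ph.commit d), qT, qM, cur),
        τ, γ, .stay, .left, .stay⟩ := by
  simp only [trans]; rw [if_neg hg]

theorem trans_commit_go {d : Beh M} (hb : ¬ γ = M.blank) :
    trans T M (Ph.commit d, qT, qM, cur) σ τ γ =
      ⟨(Ph.ready, qT, (cur.1 qM γ).st, d), τ, (cur.1 qM γ).wr,
        .stay, .stay, (cur.1 qM γ).dSt⟩ := by
  simp only [trans]; rw [if_neg hb]

end TransEval

/-! #### The simulation invariant -/

def isRet {B : Type} : Ph B → ℕ
  | .ready => 0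
  | .fetch => 0
  | .ret _ => 1
  | .commit _ => 0

def mw {B : Type} : Ph B → ℕ
  | .ready => 3
  | .fetch => 1
  | .ret _ => 2
  | .commit _ => 0

section Sim

variable (f : List α → List β) (x : List α)

/-- The transducer has produced the first `j` symbols of `f x` (or all of them). -/
def PosOK (tT j : ℕ) : Prop :=
  ((T.run x tT).out.length = j ∧ j ≤ (f x).length) ∨
  ((f x).length < j ∧ (T.run x tT).st ∈ T.qhalt)

/-- A fetch of the next input symbol of `M` is pending. -/
def Pending (tM : ℕ) : Prop :=
  (M.δ (M.run (f x) tM).st (inAt (f x) (M.run (f x) tM).ip)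
    ((M.run (f x) tM).tape (M.run (f x) tM).sp)).dIn = Dir.right ∧
  M.dv ((M.run (f x) tM).tape (M.run (f x) tM).sp) + 1 < k

def NextOK (tT tM : ℕ) (d : Beh M) : Prop :=
  d = behOf M (inAt (f x) ((M.run (f x) tM).ip + 1)) ∧
  PosOK T f x tT ((M.run (f x) tM).ip + 1)

def PhOK (tT tM : ℕ) : Ph (Beh M) → Prop
  | .ready => PosOK T f x tT (M.run (f x) tM).ip
  | .fetch => Pending M f x tM ∧ PosOK T f x tT (M.run (f x) tM).ip
  | .ret nxt => Pending M f x tM ∧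
      (match nxt with
       | none => PosOK T f x tT (M.run (f x) tM).ip
       | some d => NextOK T M f x tT tM d)
  | .commit d => Pending M f x tM ∧ NextOK T M f x tT tM d

/-- The full configuration correspondence. -/
def Good (t tT tM : ℕ) (ph : Ph (Beh M)) : Prop :=
  ((NN T M).run x t).st = eN T M (ph, (T.run x tT).st, (M.run (f x) tM).st,
      behOf M (inAt (f x) (M.run (f x) tM).ip)) ∧
  ((NN T M).run x t).ip = (T.run x tT).ip ∧
  ((NN T M).run x t).wp = (T.run x tT).wp + isRet ph ∧
  ((NN T M).run x t).sp = (M.run (f x) tM).sp ∧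
  ((NN T M).run x t).w = (T.run x tT).w ∧
  ((NN T M).run x t).tape = (M.run (f x) tM).tape ∧
  PhOK T M f x tT tM ph

theorem NN_halted_iff (s : NSt T M) :
    (eN T M s ∈ (NN T M).qacc ∨ eN T M s ∈ (NN T M).qrej) ↔
      (s.2.2.1 ∈ M.qacc ∨ s.2.2.1 ∈ M.qrej) := by
  show (eN T M s ∈ Finset.univ.filter _ ∨ eN T M s ∈ Finset.univ.filter _) ↔ _
  rw [Finset.mem_filter, Finset.mem_filter]
  simp only [Finset.mem_univ, true_and, Equiv.symm_apply_apply]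
  tauto

theorem NN_step_eval (c : (NN T M).Cfg) (hnh : ¬ (NN T M).Halted c)
    (s : NSt T M) (hst : c.st = eN T M s) :
    (NN T M).step x c =
      ⟨eN T M (trans T M s (inAt x c.ip) (c.w c.wp) (c.tape c.sp)).st,
       moveIn x.length c.ip (trans T M s (inAt x c.ip) (c.w c.wp) (c.tape c.sp)).dIn,
       moveNat c.wp (trans T M s (inAt x c.ip) (c.w c.wp) (c.tape c.sp)).dW,
       moveNat c.sp (trans T M s (inAt x c.ip) (c.w c.wp) (c.tape c.sp)).dSt,
       Function.update c.w c.wp (trans T M s (inAt x c.ip) (c.w c.wp) (c.tape c.sp)).wrW,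
       Function.update c.tape c.sp (trans T M s (inAt x c.ip) (c.w c.wp) (c.tape c.sp)).wrG⟩ := by
  have hδ : ∀ σ τ γ, (NN T M).δ c.st σ τ γ =
      ⟨eN T M (trans T M s σ τ γ).st, (trans T M s σ τ γ).wrW, (trans T M s σ τ γ).wrG,
       (trans T M s σ τ γ).dIn, (trans T M s σ τ γ).dW, (trans T M s σ τ γ).dSt⟩ := by
    intro σ τ γ
    show (let o := trans T M ((eN T M).symm c.st) σ τ γ;
      AuxOut.mk (eN T M o.st) o.wrW o.wrG o.dIn o.dW o.dSt) = _
    rw [hst, Equiv.symm_apply_apply]; rfl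
  unfold AuxSDA.step
  rw [if_neg (show ¬(c.st ∈ (NN T M).qacc ∨ c.st ∈ (NN T M).qrej) from hnh)]
  show AuxSDA.Cfg.mk ((NN T M).δ c.st (inAt x c.ip) (c.w c.wp) (c.tape c.sp)).st _ _ _ _ _ = _
  rw [hδ]

theorem M_step_eval {y : List β} {tM : ℕ} (hb : ¬ M.Halted (M.run y tM)) :
    M.run y (tM + 1) =
      ⟨(M.δ (M.run y tM).st (inAt y (M.run y tM).ip) ((M.run y tM).tape (M.run y tM).sp)).st,
       moveIn y.length (M.run y tM).ip
         (M.δ (M.run y tM).st (inAt y (M.run y tM).ip) ((M.run y tM).tape (M.run y tM).sp)).dIn,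
       moveNat (M.run y tM).sp
         (M.δ (M.run y tM).st (inAt y (M.run y tM).ip) ((M.run y tM).tape (M.run y tM).sp)).dSt,
       Function.update (M.run y tM).tape (M.run y tM).sp
         (M.δ (M.run y tM).st (inAt y (M.run y tM).ip) ((M.run y tM).tape (M.run y tM).sp)).wr⟩ := by
  rw [SDA.run_succ]
  unfold SDA.step
  rw [if_neg (show ¬((M.run y tM).st ∈ M.qacc ∨ (M.run y tM).st ∈ M.qrej) from hb)]

theorem T_step_eval {tT : ℕ} (hb : (T.run x tT).st ∉ T.qhalt) :
    T.run x (tT + 1) =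
      ⟨(T.δ (T.run x tT).st (inAt x (T.run x tT).ip) ((T.run x tT).w (T.run x tT).wp)).st,
       moveIn x.length (T.run x tT).ip
         (T.δ (T.run x tT).st (inAt x (T.run x tT).ip) ((T.run x tT).w (T.run x tT).wp)).dIn,
       moveNat (T.run x tT).wp
         (T.δ (T.run x tT).st (inAt x (T.run x tT).ip) ((T.run x tT).w (T.run x tT).wp)).dW,
       Function.update (T.run x tT).w (T.run x tT).wp
         (T.δ (T.run x tT).st (inAt x (T.run x tT).ip) ((T.run x tT).w (T.run x tT).wp)).wr,
       (T.run x tT).out ++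
         (T.δ (T.run x tT).st (inAt x (T.run x tT).ip) ((T.run x tT).w (T.run x tT).wp)).out.toList⟩ := by
  rw [TransTM.run_succ]
  unfold TransTM.step
  rw [if_neg hb]

theorem inAt_rend {y : List β} {i : ℕ} (h : y.length < i) : inAt y i = InSym.rend := by
  unfold inAt
  rw [if_neg (by omega), dif_neg (by omega)]

theorem inAt_zero {y : List β} : inAt y 0 = InSym.lend := by
  unfold inAt
  rw [if_pos rfl]

theorem inAt_of_append {y l : List β} {b : β} (h : l ++ [b] <+: y) :
    inAt y (l.length + 1) = InSym.sym b := by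
  obtain ⟨r, hr⟩ := h
  subst hr
  unfold inAt
  rw [if_neg (by omega), dif_pos (by simp)]
  congr 1
  rw [List.get_eq_getElem]
  simp only [List.append_assoc, List.singleton_append, Nat.add_sub_cancel]
  rw [List.getElem_append_right (Nat.le_refl _)]
  simp

theorem main_inv (hwf : M.WellFormed) (hds : M.DepthSusceptible)
    (hfc : T.Computes f) {hT hM : ℕ}
    (hTh : (T.run x hT).st ∈ T.qhalt) (hMh : M.Halted (M.run (f x) hM)) :
    ∀ t, ∃ tT tM ph, Good T M f x t tT tM ph ∧
      ((NN T M).Halted ((NN T M).run x t) ∨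
        t + (5 * (hM - tM) + 3 * (hT - tT) + mw ph) ≤ 5 * hM + 3 * hT + 3) := by
  intro t
  induction t with
  | zero =>
    refine ⟨0, 0, Ph.ready, ⟨?_, rfl, rfl, rfl, rfl, rfl, ?_⟩, Or.inr ?_⟩
    · show (NN T M).q0 = eN T M (Ph.ready, T.q0, M.q0, behOf M (inAt (f x) 0))
      rw [inAt_zero]
      rfl
    · exact Or.inl ⟨rfl, Nat.zero_le _⟩
    · dsimp only [mw]; omega
  | succ t ih =>
    obtain ⟨tT, tM, ph, G, dm⟩ := ih
    by_cases hNh : (NN T M).Halted ((NN T M).run x t)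
    · have he : (NN T M).run x (t + 1) = (NN T M).run x t := by
        rw [AuxSDA.run_succ]; exact if_pos hNh
      obtain ⟨g1, g2, g3, g4, g5, g6, g7⟩ := G
      exact ⟨tT, tM, ph,
        ⟨by rw [he]; exact g1, by rw [he]; exact g2, by rw [he]; exact g3,
         by rw [he]; exact g4, by rw [he]; exact g5, by rw [he]; exact g6, g7⟩,
        Or.inl (by rw [he]; exact hNh)⟩
    · obtain ⟨g1, g2, g3, g4, g5, g6, g7⟩ := G
      have hmeas : t + (5 * (hM - tM) + 3 * (hT - tT) + mw ph) ≤ 5 * hM + 3 * hT + 3 :=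
        dm.resolve_left hNh
      have hbM : ¬ M.Halted (M.run (f x) tM) := by
        intro h
        exact hNh (show _ ∈ _ ∨ _ ∈ _ by rw [g1]; exact (NN_halted_iff T M _).2 h)
      have htMlt : tM < hM := M_not_halted_lt M hMh hbM
      have hrun : (NN T M).run x (t + 1) = (NN T M).step x ((NN T M).run x t) :=
        AuxSDA.run_succ _ _ _
      rw [NN_step_eval T M x _ hNh _ g1] at hrun
      rw [g2, g3, g4, g5, g6] at hrun
      have hipT : (T.run x tT).ip ≤ x.length + 1 := T_ip_le T x tT
      have hipM : (M.run (f x) tM).ip ≤ (f x).length + 1 := M_ip_le M (f x) tM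
      rcases ph with _ | _ | nxt | d
      -- ############ READY ############
      · dsimp only [isRet] at hrun
        simp only [Nat.add_zero] at hrun
        by_cases hdir : (M.δ (M.run (f x) tM).st (inAt (f x) (M.run (f x) tM).ip)
            ((M.run (f x) tM).tape (M.run (f x) tM).sp)).dIn = Dir.right
        · -- enter fetch phase
          rw [trans_ready_right T M hdir] at hrun
          dsimp only [moveIn, moveNat] at hrun
          erw [Function.update_eq_self, Function.update_eq_self,
            min_eq_left hipT] at hrun
          have hdv : M.dv ((M.run (f x) tM).tape (M.run (f x) tM).sp) + 1 < k := by
            by_contra h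
            have := (hds (M.run (f x) tM).st (inAt (f x) (M.run (f x) tM).ip)
              ((M.run (f x) tM).tape (M.run (f x) tM).sp)).1 (by omega)
            rw [this] at hdir
            exact absurd hdir (by simp)
          refine ⟨tT, tM, Ph.fetch,
            ⟨(by rw [hrun]; try rfl), (by rw [hrun]; try rfl), (by rw [hrun]; try rfl), (by rw [hrun]; try rfl), (by rw [hrun]; try rfl),
             (by rw [hrun]; try rfl), ⟨hdir, hdv⟩, g7⟩, Or.inr ?_⟩
          dsimp only [mw] at hmeas ⊢
          omega
        · -- M makes a stationary-input step
          have hnl := (hwf.2.2.2.2.2 (M.run (f x) tM).st (inAt (f x) (M.run (f x) tM).ip)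
            ((M.run (f x) tM).tape (M.run (f x) tM).sp)).1
          have hstay : (M.δ (M.run (f x) tM).st (inAt (f x) (M.run (f x) tM).ip)
              ((M.run (f x) tM).tape (M.run (f x) tM).sp)).dIn = Dir.stay := by
            rcases h : (M.δ (M.run (f x) tM).st (inAt (f x) (M.run (f x) tM).ip)
              ((M.run (f x) tM).tape (M.run (f x) tM).sp)).dIn
            · exact absurd h hnl
            · rfl
            · exact absurd h hdir
          rw [trans_ready_stay T M hdir] at hrun
          dsimp only [moveIn, moveNat] at hrun
          erw [Function.update_eq_self, min_eq_left hipT] at hrun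
          have hMs := M_step_eval M hbM (y := f x) (tM := tM)
          rw [hstay] at hMs
          dsimp only [moveIn, moveNat] at hMs
          rw [min_eq_left hipM] at hMs
          refine ⟨tT, tM + 1, Ph.ready,
            ⟨(by rw [hrun, hMs]; try rfl), (by rw [hrun]; try rfl), (by rw [hrun]; try rfl), (by rw [hrun, hMs]; try rfl),
             (by rw [hrun]; try rfl), (by rw [hrun, hMs]; try rfl),
             show PosOK T f x tT (M.run (f x) (tM + 1)).ip by rw [hMs]; exact g7⟩,
            Or.inr ?_⟩
          dsimp only [mw] at hmeas ⊢
          omega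
      -- ############ FETCH ############
      · obtain ⟨⟨hdir, hdv⟩, hpos⟩ := g7
        dsimp only [isRet] at hrun
        simp only [Nat.add_zero] at hrun
        have hguard : ¬ k - 1 ≤ M.dv ((M.run (f x) tM).tape (M.run (f x) tM).sp) := by omega
        by_cases hhalt : (T.run x tT).st ∈ T.qhalt
        · -- transducer exhausted : commit the right endmarker
          rw [trans_fetch_halt T M hguard hhalt] at hrun
          dsimp only [moveIn, moveNat] at hrun
          erw [Function.update_eq_self, Function.update_eq_self, min_eq_left hipT] at hrun
          have hout : (T.run x tT).out = f x := T_out_halt T hfc hhalt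
          have hlen : (f x).length ≤ (M.run (f x) tM).ip := by
            rcases hpos with ⟨h1, _⟩ | ⟨h1, _⟩
            · rw [hout] at h1; omega
            · omega
          refine ⟨tT, tM, Ph.commit (behOf M InSym.rend),
            ⟨(by rw [hrun]; try rfl), (by rw [hrun]; try rfl), (by rw [hrun]; try rfl), (by rw [hrun]; try rfl), (by rw [hrun]; try rfl),
             (by rw [hrun]; try rfl), ⟨hdir, hdv⟩, ?_, Or.inr ⟨by omega, hhalt⟩⟩, Or.inr ?_⟩
          · rw [inAt_rend (show (f x).length < (M.run (f x) tM).ip + 1 by omega)]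
          · dsimp only [mw] at hmeas ⊢
            omega
        · -- perform one step of the transducer
          have hposl : (T.run x tT).out.length = (M.run (f x) tM).ip ∧
              (M.run (f x) tM).ip ≤ (f x).length := by
            rcases hpos with h | h
            · exact h
            · exact absurd h.2 hhalt
          have hTs := T_step_eval T x hhalt
          by_cases hdw : (T.δ (T.run x tT).st (inAt x (T.run x tT).ip)
              ((T.run x tT).w (T.run x tT).wp)).dW = Dir.stay
          · -- two-step simulation of a stationary work-head move
            rw [trans_fetch_stay T M hguard hhalt hdw] at hrun
            dsimp only [moveIn, moveNat] at hrun
            erw [Function.update_eq_self] at hrun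
            rcases hout : (T.δ (T.run x tT).st (inAt x (T.run x tT).ip)
                ((T.run x tT).w (T.run x tT).wp)).out with _ | bb
            · rw [hout] at hrun
              simp only [Option.map_none] at hrun
              refine ⟨tT + 1, tM, Ph.ret none,
                ⟨(by rw [hrun, hTs]; try rfl), (by rw [hrun, hTs]; try rfl), ?_,
                 (by rw [hrun]; try rfl), (by rw [hrun, hTs]; try rfl),
                 (by rw [hrun]; try rfl), ⟨hdir, hdv⟩, Or.inl ⟨?_, hposl.2⟩⟩, Or.inr ?_⟩
              · rw [hrun, hTs]
                dsimp only [isRet]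
                rw [hdw]
                try rfl
              · rw [hTs, hout]
                simpa using hposl.1
              · have htTlt : tT < hT := T_not_halted_lt T hTh hhalt
                dsimp only [mw] at hmeas ⊢
                omega
            · rw [hout] at hrun
              simp only [Option.map_some] at hrun
              have hpre := T_out_prefix T hfc x (tT + 1)
              rw [hTs, hout] at hpre
              simp only [Option.toList] at hpre
              have hlenp := hpre.length_le
              rw [List.length_append] at hlenp
              simp only [List.length_singleton, hposl.1] at hlenp
              have hin : inAt (f x) ((M.run (f x) tM).ip + 1) = InSym.sym bb := by
                rw [← hposl.1]
                exact inAt_of_append hpre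
              refine ⟨tT + 1, tM, Ph.ret (some (behOf M (InSym.sym bb))),
                ⟨(by rw [hrun, hTs]; try rfl), (by rw [hrun, hTs]; try rfl), ?_,
                 (by rw [hrun]; try rfl), (by rw [hrun, hTs]; try rfl),
                 (by rw [hrun]; try rfl), ⟨hdir, hdv⟩, by rw [hin],
                 Or.inl ⟨?_, by omega⟩⟩, Or.inr ?_⟩
              · rw [hrun, hTs]
                dsimp only [isRet]
                rw [hdw]
                try rfl
              · rw [hTs, hout]
                simp [hposl.1]
              · have htTlt : tT < hT := T_not_halted_lt T hTh hhalt
                dsimp only [mw] at hmeas ⊢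
                omega
          · -- direct simulation of a moving work-head step
            rw [trans_fetch_move T M hguard hhalt hdw] at hrun
            dsimp only [moveIn, moveNat] at hrun
            erw [Function.update_eq_self] at hrun
            have htTlt : tT < hT := T_not_halted_lt T hTh hhalt
            rcases hout : (T.δ (T.run x tT).st (inAt x (T.run x tT).ip)
                ((T.run x tT).w (T.run x tT).wp)).out with _ | bb
            · rw [hout] at hrun
              refine ⟨tT + 1, tM, Ph.fetch,
                ⟨(by rw [hrun, hTs]; try rfl), (by rw [hrun, hTs]; try rfl), ?_,
                 (by rw [hrun]; try rfl), (by rw [hrun, hTs]; try rfl),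
                 (by rw [hrun]; try rfl), ⟨hdir, hdv⟩, Or.inl ⟨?_, hposl.2⟩⟩,
                Or.inr ?_⟩
              · rw [hrun, hTs]
                dsimp only [isRet]
                rw [Nat.add_zero]
                try rfl
              · rw [hTs, hout]
                simpa using hposl.1
              · dsimp only [mw] at hmeas ⊢
                omega
            · rw [hout] at hrun
              have hpre := T_out_prefix T hfc x (tT + 1)
              rw [hTs, hout] at hpre
              simp only [Option.toList] at hpre
              have hlenp := hpre.length_le
              rw [List.length_append] at hlenp
              simp only [List.length_singleton, hposl.1] at hlenp
              have hin : inAt (f x) ((M.run (f x) tM).ip + 1) = InSym.sym bb := by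
                rw [← hposl.1]
                exact inAt_of_append hpre
              refine ⟨tT + 1, tM, Ph.commit (behOf M (InSym.sym bb)),
                ⟨(by rw [hrun, hTs]; try rfl), (by rw [hrun, hTs]; try rfl), ?_,
                 (by rw [hrun]; try rfl), (by rw [hrun, hTs]; try rfl),
                 (by rw [hrun]; try rfl), ⟨hdir, hdv⟩, by rw [hin],
                 Or.inl ⟨?_, by omega⟩⟩, Or.inr ?_⟩
              · rw [hrun, hTs]
                dsimp only [isRet]
                rw [Nat.add_zero]
                try rfl
              · rw [hTs, hout]
                simp [hposl.1]
              · dsimp only [mw] at hmeas ⊢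
                omega
      -- ############ RET ############
      · obtain ⟨pend, hnxt⟩ := g7
        dsimp only [isRet] at hrun
        have hguard : ¬ k - 1 ≤ M.dv ((M.run (f x) tM).tape (M.run (f x) tM).sp) := by
          have := pend.2; omega
        rw [trans_ret_go T M hguard] at hrun
        dsimp only [moveIn, moveNat] at hrun
        erw [Function.update_eq_self, Function.update_eq_self, min_eq_left hipT,
          Nat.add_sub_cancel] at hrun
        rcases nxt with _ | d
        · refine ⟨tT, tM, Ph.fetch,
            ⟨(by rw [hrun]; try rfl), (by rw [hrun]; try rfl), (by rw [hrun]; try rfl), (by rw [hrun]; try rfl), (by rw [hrun]; try rfl),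
             (by rw [hrun]; try rfl), pend, hnxt⟩, Or.inr ?_⟩
          dsimp only [mw] at hmeas ⊢
          omega
        · refine ⟨tT, tM, Ph.commit d,
            ⟨(by rw [hrun]; try rfl), (by rw [hrun]; try rfl), (by rw [hrun]; try rfl), (by rw [hrun]; try rfl), (by rw [hrun]; try rfl),
             (by rw [hrun]; try rfl), pend, hnxt⟩, Or.inr ?_⟩
          dsimp only [mw] at hmeas ⊢
          omega
      -- ############ COMMIT ############
      · obtain ⟨⟨hdir, hdv⟩, hd, hpos1⟩ := g7
        dsimp only [isRet] at hrun
        simp only [Nat.add_zero] at hrun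
        have hbγ : ¬ (M.run (f x) tM).tape (M.run (f x) tM).sp = M.blank := by
          intro h
          rw [h, hwf.2.2.1] at hdv
          omega
        rw [trans_commit_go T M hbγ] at hrun
        have hbeh : ((behOf M (inAt (f x) (M.run (f x) tM).ip)).1 (M.run (f x) tM).st
            ((M.run (f x) tM).tape (M.run (f x) tM).sp)) =
            M.δ (M.run (f x) tM).st (inAt (f x) (M.run (f x) tM).ip)
              ((M.run (f x) tM).tape (M.run (f x) tM).sp) := rfl
        rw [hbeh] at hrun
        dsimp only [moveIn, moveNat] at hrun
        erw [Function.update_eq_self, min_eq_left hipT] at hrun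
        have hMs := M_step_eval M hbM (y := f x) (tM := tM)
        rw [hdir] at hMs
        dsimp only [moveIn, moveNat] at hMs
        have hmin : inAt (f x) (min ((M.run (f x) tM).ip + 1) ((f x).length + 1)) =
            inAt (f x) ((M.run (f x) tM).ip + 1) := by
          rcases le_or_gt ((M.run (f x) tM).ip + 1) ((f x).length + 1) with h | h
          · rw [min_eq_left h]
          · rw [min_eq_right (by omega), inAt_rend (by omega), inAt_rend (by omega)]
        have hposm : PosOK T f x tT (min ((M.run (f x) tM).ip + 1) ((f x).length + 1)) := by
          rcases le_or_gt ((M.run (f x) tM).ip + 1) ((f x).length + 1) with h | h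
          · rw [min_eq_left h]; exact hpos1
          · rw [min_eq_right (by omega)]
            rcases hpos1 with ⟨_, h2⟩ | ⟨_, h2⟩
            · omega
            · exact Or.inr ⟨by omega, h2⟩
        refine ⟨tT, tM + 1, Ph.ready,
          ⟨?_, (by rw [hrun]; try rfl), (by rw [hrun]; try rfl), (by rw [hrun, hMs]; try rfl), (by rw [hrun]; try rfl),
           (by rw [hrun, hMs]; try rfl),
           show PosOK T f x tT (M.run (f x) (tM + 1)).ip by rw [hMs]; exact hposm⟩,
          Or.inr ?_⟩
        · rw [hrun, hMs]
          show eN T M (Ph.ready, (T.run x tT).st, _, d) = _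
          rw [hd, ← hmin]
        · dsimp only [mw] at hmeas ⊢
          omega

theorem NN_mem_qacc (s : NSt T M) :
    eN T M s ∈ (NN T M).qacc ↔ s.2.2.1 ∈ M.qacc := by
  show _ ∈ Finset.univ.filter _ ↔ _
  rw [Finset.mem_filter]
  simp [Equiv.symm_apply_apply]

theorem NN_mem_qrej (s : NSt T M) :
    eN T M s ∈ (NN T M).qrej ↔ (s.2.2.1 ∈ M.qrej ∧ s.2.2.1 ∉ M.qacc) := by
  show _ ∈ Finset.univ.filter _ ↔ _
  rw [Finset.mem_filter]
  simp [Equiv.symm_apply_apply]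

theorem NN_halts (hwf : M.WellFormed) (hds : M.DepthSusceptible)
    (hfc : T.Computes f) {hT hM : ℕ}
    (hTh : (T.run x hT).st ∈ T.qhalt) (hMh : M.Halted (M.run (f x) hM)) :
    (NN T M).Halted ((NN T M).run x (5 * hM + 3 * hT + 3)) := by
  obtain ⟨tT, tM, ph, G, dm⟩ :=
    main_inv T M f x hwf hds hfc hTh hMh (5 * hM + 3 * hT + 3)
  rcases dm with h | h
  · exact h
  · have h5 : hM ≤ tM := by omega
    have hMt : M.Halted (M.run (f x) tM) := by
      rw [M_frozen M hMh h5]; exact hMh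
    show _ ∈ _ ∨ _ ∈ _
    rw [G.1]
    exact (NN_halted_iff T M _).2 hMt

theorem NN_acc (hwf : M.WellFormed) (hds : M.DepthSusceptible)
    (hfc : T.Computes f) {hT hM : ℕ}
    (hTh : (T.run x hT).st ∈ T.qhalt) (hMh : M.Halted (M.run (f x) hM)) :
    (NN T M).Accepts x ↔ M.Accepts (f x) := by
  constructor
  · rintro ⟨t, ht⟩
    obtain ⟨tT, tM, ph, G, -⟩ := main_inv T M f x hwf hds hfc hTh hMh t
    rw [G.1] at ht
    exact ⟨tM, (NN_mem_qacc T M _).1 ht⟩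
  · rintro ⟨s0, hs0⟩
    have hH : ((NN T M).run x (5 * hM + 3 * hT + 3)).st ∈ (NN T M).qacc ∨
        ((NN T M).run x (5 * hM + 3 * hT + 3)).st ∈ (NN T M).qrej :=
      NN_halts T M f x hwf hds hfc hTh hMh
    obtain ⟨tT, tM, ph, G, -⟩ :=
      main_inv T M f x hwf hds hfc hTh hMh (5 * hM + 3 * hT + 3)
    rw [G.1] at hH
    have hq := (NN_halted_iff T M _).1 hH
    have heq := M_halt_eq M (hq : M.Halted (M.run (f x) tM)) (Or.inl hs0)
    have hacc : (M.run (f x) tM).st ∈ M.qacc := by rw [heq]; exact hs0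
    exact ⟨5 * hM + 3 * hT + 3, by rw [G.1]; exact (NN_mem_qacc T M _).2 hacc⟩

theorem NN_rej (hwf : M.WellFormed) (hds : M.DepthSusceptible)
    (hfc : T.Computes f) {hT hM : ℕ}
    (hTh : (T.run x hT).st ∈ T.qhalt) (hMh : M.Halted (M.run (f x) hM)) :
    (NN T M).Rejects x ↔ ¬ M.Accepts (f x) := by
  constructor
  · rintro ⟨t, ht⟩ ⟨s0, hs0⟩
    obtain ⟨tT, tM, ph, G, -⟩ := main_inv T M f x hwf hds hfc hTh hMh t
    rw [G.1] at ht
    obtain ⟨hrej, hnacc⟩ := (NN_mem_qrej T M _).1 ht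
    have heq := M_halt_eq M (Or.inr hrej : M.Halted (M.run (f x) tM)) (Or.inl hs0)
    exact hnacc (by rw [heq]; exact hs0)
  · intro hnacc
    have hH : ((NN T M).run x (5 * hM + 3 * hT + 3)).st ∈ (NN T M).qacc ∨
        ((NN T M).run x (5 * hM + 3 * hT + 3)).st ∈ (NN T M).qrej :=
      NN_halts T M f x hwf hds hfc hTh hMh
    obtain ⟨tT, tM, ph, G, -⟩ :=
      main_inv T M f x hwf hds hfc hTh hMh (5 * hM + 3 * hT + 3)
    rw [G.1] at hH
    rcases (NN_halted_iff T M _).1 hH with hq | hq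
    · exact absurd ⟨tM, hq⟩ hnacc
    · refine ⟨5 * hM + 3 * hT + 3, ?_⟩
      rw [G.1]
      exact (NN_mem_qrej T M _).2 ⟨hq, fun h => hnacc ⟨tM, h⟩⟩

theorem NN_wp_bound (hwf : M.WellFormed) (hds : M.DepthSusceptible)
    (hfc : T.Computes f) {hT hM : ℕ}
    (hTh : (T.run x hT).st ∈ T.qhalt) (hMh : M.Halted (M.run (f x) hM)) (t : ℕ) :
    ∃ tT, ((NN T M).run x t).wp ≤ (T.run x tT).wp + 1 := by
  obtain ⟨tT, tM, ph, G, -⟩ := main_inv T M f x hwf hds hfc hTh hMh t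
  refine ⟨tT, ?_⟩
  rw [G.2.2.1]
  have : isRet ph ≤ 1 := by rcases ph <;> simp [isRet]
  omega

end Sim

end Machines

/-! #### Polynomial growth arithmetic -/

theorem exists_poly_ge (g : ℕ → ℕ) (A E : ℕ) (hg : ∀ n, g n ≤ A * (n + 2) ^ E) :
    ∃ c : ℕ, ∀ n, g n ≤ c * n ^ c + c := by
  refine ⟨A * 3 ^ E + A * 2 ^ E + E + 1, fun n => ?_⟩
  rcases Nat.eq_zero_or_pos n with rfl | hn
  · have hc0 : (A * 3 ^ E + A * 2 ^ E + E + 1) *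
        0 ^ (A * 3 ^ E + A * 2 ^ E + E + 1) + (A * 3 ^ E + A * 2 ^ E + E + 1) =
        A * 3 ^ E + A * 2 ^ E + E + 1 := by
      rw [zero_pow (by omega), Nat.mul_zero, Nat.zero_add]
    rw [hc0]
    calc g 0 ≤ A * (0 + 2) ^ E := hg 0
      _ = A * 2 ^ E := by norm_num
      _ ≤ A * 3 ^ E + A * 2 ^ E + E + 1 :=
        le_trans (Nat.le_add_left _ _) (le_trans (Nat.le_add_right _ E) (Nat.le_add_right _ 1))
  · have h1 : (n + 2) ^ E ≤ 3 ^ E * n ^ E := by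
      calc (n + 2) ^ E ≤ (3 * n) ^ E := Nat.pow_le_pow_left (by omega) E
        _ = 3 ^ E * n ^ E := mul_pow 3 n E
    have h2 : n ^ E ≤ n ^ (A * 3 ^ E + A * 2 ^ E + E + 1) :=
      Nat.pow_le_pow_right hn
        (le_trans (Nat.le_add_left E _) (Nat.le_add_right _ 1))
    calc g n ≤ A * (n + 2) ^ E := hg n
      _ ≤ A * (3 ^ E * n ^ E) := Nat.mul_le_mul_left A h1
      _ = (A * 3 ^ E) * n ^ E := by ring
      _ ≤ (A * 3 ^ E) * n ^ (A * 3 ^ E + A * 2 ^ E + E + 1) := Nat.mul_le_mul_left _ h2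
      _ ≤ (A * 3 ^ E + A * 2 ^ E + E + 1) * n ^ (A * 3 ^ E + A * 2 ^ E + E + 1) :=
        Nat.mul_le_mul_right _
          (le_trans (Nat.le_add_right _ _) (le_trans (Nat.le_add_right _ E) (Nat.le_add_right _ 1)))
      _ ≤ _ := Nat.le_add_right _ _

theorem poly_compose_bound (cT cM : ℕ) :
    ∃ c : ℕ, ∀ n,
      5 * (cM * (cT * n ^ cT + cT) ^ cM + cM) + 3 * (cT * n ^ cT + cT) + 3 ≤
        c * n ^ c + c := by
  set D := 2 * (cT + 1) with hD
  set E := cT * cM + cT with hE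
  set A := 5 * cM * D ^ cM + 5 * cM + 3 * D + 3 with hA
  apply exists_poly_ge _ A E
  intro n
  have hone : 1 ≤ (n + 2) ^ E := Nat.one_le_pow _ _ (by omega)
  have p1 : n ^ cT ≤ (n + 2) ^ cT := Nat.pow_le_pow_left (by omega) _
  have p2 : 1 ≤ (n + 2) ^ cT := Nat.one_le_pow _ _ (by omega)
  have ht1 : cT * n ^ cT + cT ≤ D * (n + 2) ^ cT := by
    have a1 : cT * n ^ cT ≤ cT * (n + 2) ^ cT := Nat.mul_le_mul_left cT p1
    have a2 : cT * 1 ≤ cT * (n + 2) ^ cT := Nat.mul_le_mul_left cT p2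
    rw [Nat.mul_one] at a2
    calc cT * n ^ cT + cT ≤ cT * (n + 2) ^ cT + cT * (n + 2) ^ cT := Nat.add_le_add a1 a2
      _ = 2 * cT * (n + 2) ^ cT := by ring
      _ ≤ D * (n + 2) ^ cT := Nat.mul_le_mul_right _ (by omega)
  have ht2 : (cT * n ^ cT + cT) ^ cM ≤ D ^ cM * (n + 2) ^ (cT * cM) := by
    calc (cT * n ^ cT + cT) ^ cM ≤ (D * (n + 2) ^ cT) ^ cM := Nat.pow_le_pow_left ht1 cM
      _ = D ^ cM * ((n + 2) ^ cT) ^ cM := mul_pow _ _ _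
      _ = D ^ cM * (n + 2) ^ (cT * cM) := by rw [← pow_mul]
  have q1 : (n + 2) ^ (cT * cM) ≤ (n + 2) ^ E := Nat.pow_le_pow_right (by omega) (by omega)
  have q2 : (n + 2) ^ cT ≤ (n + 2) ^ E := Nat.pow_le_pow_right (by omega) (by omega)
  have hX : cM * ((cT * n ^ cT + cT) ^ cM) ≤ cM * (D ^ cM * (n + 2) ^ E) := by
    refine Nat.mul_le_mul_left cM (ht2.trans ?_)
    exact Nat.mul_le_mul_left _ q1
  have hcm : cM ≤ cM * (n + 2) ^ E := Nat.le_mul_of_pos_right _ (by omega)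
  have hY : cT * n ^ cT + cT ≤ D * (n + 2) ^ E := ht1.trans (Nat.mul_le_mul_left _ q2)
  have h3 : 3 ≤ 3 * (n + 2) ^ E := Nat.le_mul_of_pos_right _ (by omega)
  calc 5 * (cM * (cT * n ^ cT + cT) ^ cM + cM) + 3 * (cT * n ^ cT + cT) + 3
      ≤ 5 * (cM * (D ^ cM * (n + 2) ^ E) + cM * (n + 2) ^ E) +
        3 * (D * (n + 2) ^ E) + 3 * (n + 2) ^ E :=
        Nat.add_le_add (Nat.add_le_add (Nat.mul_le_mul_left 5 (Nat.add_le_add hX hcm))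
          (Nat.mul_le_mul_left 3 hY)) h3
    _ = A * (n + 2) ^ E := by rw [hA]; ring

end

end SDAP

open SDAP in
/-- Given `f ∈ FL` and a polynomial-time depth-susceptible
`k`-sda `M`, the language `{ x | f(x) ∈ L(M) }` is recognized by some
logarithmic-space auxiliary depth-`k` storage automaton in polynomial time. -/
theorem FL_then_kSDA_gives_auxSDA (k : ℕ) (α β : Type)
    (f : List α → List β) (hf : InFL f)
    (M : SDA k β) (hwf : M.WellFormed) (hds : M.DepthSusceptible)
    (hpt : M.PolyTime) :
    ∃ N : AuxSDA k α, N.WellFormed ∧ N.DepthSusceptible ∧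
      N.PolyTime ∧ N.LogSpace ∧
      N.Recognizes {x : List α | f x ∈ M.lang} := by
  obtain ⟨T, hfc, ⟨cT, hcT⟩, ⟨cL, hcL⟩⟩ := hf
  obtain ⟨cM, hcM⟩ := hpt
  refine ⟨NN T M, NN_wf T M hwf hds, NN_ds T M hwf hds, ?_, ?_, ?_⟩
  · -- polynomial time
    obtain ⟨c, hc⟩ := poly_compose_bound cT cM
    refine ⟨c, fun x => ?_⟩
    obtain ⟨hTx, hTle, hThalt⟩ := hcT x
    obtain ⟨hMx, hMle, hMhalt⟩ := hcM (f x)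
    refine ⟨5 * hMx + 3 * hTx + 3, ?_, NN_halts T M f x hwf hds hfc hThalt hMhalt⟩
    have hfl : (f x).length ≤ hTx := by
      rw [← T_out_halt T hfc hThalt]; exact T_out_len T x hTx
    have h1 : hMx ≤ cM * (cT * x.length ^ cT + cT) ^ cM + cM := by
      refine hMle.trans (Nat.add_le_add_right (Nat.mul_le_mul_left cM ?_) cM)
      exact Nat.pow_le_pow_left (hfl.trans hTle) cM
    have h2 : hTx ≤ cT * x.length ^ cT + cT := hTle
    calc 5 * hMx + 3 * hTx + 3
        ≤ 5 * (cM * (cT * x.length ^ cT + cT) ^ cM + cM) +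
          3 * (cT * x.length ^ cT + cT) + 3 := by
          refine Nat.add_le_add (Nat.add_le_add ?_ ?_) (le_refl 3)
          · exact Nat.mul_le_mul_left 5 h1
          · exact Nat.mul_le_mul_left 3 h2
      _ ≤ c * x.length ^ c + c := hc x.length
  · -- logarithmic space
    refine ⟨cL + 1, fun x t => ?_⟩
    obtain ⟨hTx, hTle, hThalt⟩ := hcT x
    obtain ⟨hMx, hMle, hMhalt⟩ := hcM (f x)
    obtain ⟨tT, hwp⟩ := NN_wp_bound T M f x hwf hds hfc hThalt hMhalt t
    have hL := hcL x tT
    have hmono : cL * Nat.log 2 x.length ≤ (cL + 1) * Nat.log 2 x.length :=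
      Nat.mul_le_mul_right _ (Nat.le_succ cL)
    calc ((NN T M).run x t).wp + 1 ≤ ((T.run x tT).wp + 1) + 1 := by omega
      _ ≤ (cL * Nat.log 2 x.length + cL) + 1 := Nat.add_le_add_right hL 1
      _ = cL * Nat.log 2 x.length + (cL + 1) := by omega
      _ ≤ (cL + 1) * Nat.log 2 x.length + (cL + 1) := Nat.add_le_add_right hmono _
  · -- recognizes the language
    intro x
    obtain ⟨hTx, hTle, hThalt⟩ := hcT x
    obtain ⟨hMx, hMle, hMhalt⟩ := hcM (f x)
    have ha := NN_acc T M f x hwf hds hfc hThalt hMhalt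
    have hr := NN_rej T M f x hwf hds hfc hThalt hMhalt
    have hmem : (x ∈ {x : List α | f x ∈ M.lang}) ↔ M.Accepts (f x) := Iff.rfl
    exact ⟨hmem.trans ha.symm, ⟨fun h => hr.2 (fun hacc => h (hmem.2 hacc)),
      fun h hx => (hr.1 h) (hmem.1 hx)⟩⟩
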